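/- For every nonzero t ∈ ℂ, the Bessel–Struve kernel function of order η = 1/2 satisfies S_{1/2}(t) = (e^t - 1)/t; that is, (Γ(3/2)/√π) Σ_{m=0}^∞ t^m Γ((m+1)/2) / (m! Γ(m/2 + 3/2)) = (e^t - 1)/t. -/

import Mathlib

open MeasureTheory Complex

/-- The Bessel–Struve kernel function, defined by its power series. -/
noncomputable def besselStruve (η t : ℂ) : ℂ :=
  (Complex.Gamma (η + 1) / (Real.sqrt Real.pi : ℂ)) *
    ∑' m : ℕ, t ^ m * Complex.Gamma (((m : ℂ) + 1) / 2) /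
      ((m.factorial : ℂ) * Complex.Gamma ((m : ℂ) / 2 + η + 1))

/-- The extended beta function `B_η^{p,q}(ξ₁, ξ₂)`. -/
noncomputable def extBeta (η p q ξ₁ ξ₂ : ℂ) : ℂ :=
  ∫ y in (0:ℝ)..1, (y : ℂ) ^ (ξ₁ - 1) * ((1 : ℂ) - (y : ℂ)) ^ (ξ₂ - 1) *
    besselStruve η (-p / (y : ℂ)) * besselStruve η (-q / (1 - (y : ℂ)))

/-- The Pochhammer symbol `(a)_l = Γ(a + l)/Γ(a)`. -/
noncomputable def poch (a : ℂ) (l : ℕ) : ℂ := Complex.Gamma (a + l) / Complex.Gamma a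

/-- The extended Gauss hypergeometric function `F_η^{p,q}(ξ₁, ξ₂; ξ₃; x)`. -/
noncomputable def extF (η p q ξ₁ ξ₂ ξ₃ x : ℂ) : ℂ :=
  ∑' l : ℕ, poch ξ₁ l * extBeta η p q (ξ₂ + l) (ξ₃ - ξ₂) * x ^ l /
    (Complex.betaIntegral ξ₂ (ξ₃ - ξ₂) * (l.factorial : ℂ))

/-- The extended confluent hypergeometric function `Φ_η^{p,q}(ξ₂; ξ₃; x)`. -/
noncomputable def extPhi (η p q ξ₂ ξ₃ x : ℂ) : ℂ :=
  ∑' l : ℕ, extBeta η p q (ξ₂ + l) (ξ₃ - ξ₂) * x ^ l /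
    (Complex.betaIntegral ξ₂ (ξ₃ - ξ₂) * (l.factorial : ℂ))

theorem besselStruve_half (t : ℂ) (ht : t ≠ 0) :
    besselStruve (1/2) t = (Complex.exp t - 1) / t := by
  have hterm : ∀ m : ℕ, t ^ m * Complex.Gamma (((m : ℂ) + 1) / 2) /
      ((m.factorial : ℂ) * Complex.Gamma ((m : ℂ) / 2 + 1/2 + 1)) =
      2 * (t ^ m / ((m + 1).factorial : ℂ)) := by
    intro m
    have h1 : ((m : ℂ) + 1) / 2 ≠ 0 := by
      intro h
      have : (m : ℂ) + 1 = 0 := by field_simp at h; simpa using h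
      exact (Nat.cast_add_one_ne_zero m) this
    have hG : Complex.Gamma (((m : ℂ) + 1) / 2) ≠ 0 := by
      apply Complex.Gamma_ne_zero
      intro k h
      rw [show ((m : ℂ) + 1) / 2 = ((((m:ℝ)+1)/2 : ℝ) : ℂ) by push_cast; ring,
          show (-(k:ℂ)) = ((-(k:ℝ) : ℝ) : ℂ) by push_cast; ring] at h
      have h2 := Complex.ofReal_inj.mp h
      nlinarith [Nat.cast_nonneg (α := ℝ) m, Nat.cast_nonneg (α := ℝ) k]
    have heq : (m : ℂ) / 2 + 1/2 + 1 = ((m : ℂ) + 1) / 2 + 1 := by ring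
    rw [heq, Complex.Gamma_add_one _ h1]
    have hfac : ((m + 1).factorial : ℂ) = (m + 1) * (m.factorial : ℂ) := by
      rw [Nat.factorial_succ]; push_cast; ring
    rw [hfac]
    have hm1 : ((m : ℂ) + 1) ≠ 0 := Nat.cast_add_one_ne_zero m
    have hf : (m.factorial : ℂ) ≠ 0 := Nat.cast_ne_zero.mpr m.factorial_ne_zero
    field_simp
  have hsum : HasSum (fun m : ℕ => t ^ m / ((m + 1).factorial : ℂ)) ((Complex.exp t - 1) / t) := by
    have h := NormedSpace.expSeries_div_hasSum_exp t
    rw [← Complex.exp_eq_exp_ℂ] at h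
    have h1 : HasSum (fun m : ℕ => t ^ (m + 1) / ((m + 1).factorial : ℂ)) (Complex.exp t - 1) := by
      rw [hasSum_nat_add_iff (f := fun n : ℕ => t ^ n / (n.factorial : ℂ)) 1]
      simpa using h
    have h2 := h1.div_const t
    have heq2 : (fun m : ℕ => t ^ (m + 1) / ((m + 1).factorial : ℂ) / t) =
        fun m : ℕ => t ^ m / ((m + 1).factorial : ℂ) := by
      funext m
      rw [pow_succ, mul_comm (t ^ m) t, mul_div_assoc, mul_div_cancel_left₀ _ ht]
    rwa [heq2] at h2
  rw [besselStruve, tsum_congr hterm, tsum_mul_left, hsum.tsum_eq]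
  have hg : Complex.Gamma (1/2 + 1) = (1/2) * (Real.sqrt Real.pi : ℂ) := by
    rw [Complex.Gamma_add_one _ (by norm_num), Complex.Gamma_one_half_eq]
    congr 1
    rw [show ((1:ℂ)/2) = ((1/2:ℝ):ℂ) by norm_num, ← Complex.ofReal_cpow Real.pi_nonneg,
      Real.sqrt_eq_rpow]
  rw [hg]
  have hpi : (Real.sqrt Real.pi : ℂ) ≠ 0 := by
    simp [Real.sqrt_ne_zero', Real.pi_pos]
  field_simp
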